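/- arXiv:1910.08508 — 2 statements merged into one kernel-verified Lean document; each statement's English description precedes it below -/
import Mathlib

section
/- Let d ≥ 2 be an integer and let (ω_k)_{k∈ℤ^d} be a family of independent real-valued random variables on a probability space (Ω, P). Let η > 0 and κ ∈ (0,1] satisfy P[ω_k ≥ η] ≥ κ for all k ∈ ℤ^d. Then for all q > 0 and α ∈ (0,1) there exists L₀ ∈ ℕ such that for every integer L ≥ L₀ and every odd integer l with (1/2)·(ln(L^α))^{2/3} < l ≤ (ln(L^α))^{2/3}, the event A_{l,L} := {ω : for every j ∈ (lℤ)^d with ‖j‖_∞ < L there exists k ∈ ℤ^d with ‖k − j‖_∞ < l/2 and ω_k ≥ η} satisfies P[A_{l,L}] ≥ 1 − L^{−q}. -/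
set_option maxHeartbeats 1000000

open MeasureTheory ProbabilityTheory


private lemma numeric_bound (d : ℕ) (hd : 2 ≤ d) (q α κ : ℝ) (hq : 0 < q)
    (hα0 : 0 < α) (hκ0 : 0 < κ) (hκ1 : κ ≤ 1) :
    ∃ L₀ : ℕ, 3 ≤ L₀ ∧ ∀ L : ℕ, L₀ ≤ L → ∀ n : ℕ,
      (1/2) * (α * Real.log L) ^ ((2:ℝ)/3) < (n:ℝ) →
      (2*(L:ℝ)+1)^d * (1-κ)^(n^d) ≤ (L:ℝ)^(-q) := by
  rcases eq_or_lt_of_le hκ1 with hκe | hκlt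
  · -- κ = 1
    refine ⟨3, le_refl 3, fun L hL n hn => ?_⟩
    have hL3 : (3:ℝ) ≤ L := by exact_mod_cast hL
    have ht : 0 < Real.log L := Real.log_pos (by linarith)
    have hs : 0 < (α * Real.log L) ^ ((2:ℝ)/3) :=
      Real.rpow_pos_of_pos (by positivity) _
    have hn1 : 1 ≤ n := by
      by_contra h
      push_neg at h
      interval_cases n
      · simp at hn; linarith
    have h0 : (1 - κ) = 0 := by rw [← hκe]; ring
    rw [h0, zero_pow (by positivity), mul_zero]
    positivity
  · -- κ < 1
    set ε := 1 - κ with hε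
    have hε0 : 0 < ε := by rw [hε]; linarith
    have hε1 : ε < 1 := by rw [hε]; linarith
    set c := -Real.log ε with hc
    have hc0 : 0 < c := by
      have := Real.log_neg hε0 hε1
      rw [hc]; linarith
    set A := α ^ ((4:ℝ)/3) with hA
    have hA0 : 0 < A := Real.rpow_pos_of_pos hα0 _
    set R := 4 * (2*(d:ℝ) + q) / (c * A) with hR
    have hR0 : 0 < R := by
      have hd0 : (0:ℝ) < d := by exact_mod_cast lt_of_lt_of_le two_pos hd
      positivity
    set M := R ^ (3:ℕ) with hM
    have hRc : (1/4) * A * R * c = 2*(d:ℝ) + q := by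
      rw [hR]; field_simp
    clear_value ε c A R M
    refine ⟨max 3 (⌈Real.exp M⌉₊ + 1), le_max_left _ _, fun L hL n hn => ?_⟩
    have hL3 : (3:ℝ) ≤ L := by
      have := le_trans (le_max_left 3 _) hL; exact_mod_cast this
    have hLM : Real.exp M ≤ L := by
      have h1 := le_trans (le_max_right 3 _) hL
      have h2 : Real.exp M ≤ (⌈Real.exp M⌉₊ : ℝ) := Nat.le_ceil _
      have h3 : ((⌈Real.exp M⌉₊ + 1 : ℕ) : ℝ) ≤ L := by exact_mod_cast h1
      push_cast at h3; linarith
    have hLpos : (0:ℝ) < L := by linarith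
    set t := Real.log L with htdef
    clear_value t
    have ht : 0 < t := htdef ▸ Real.log_pos (by linarith)
    have htM : M ≤ t := by
      rw [htdef, Real.le_log_iff_exp_le hLpos]; exact hLM
    have hs0 : 0 < (α * t) ^ ((2:ℝ)/3) := Real.rpow_pos_of_pos (by positivity) _
    have hn0 : (0:ℝ) < n := lt_trans (by positivity) hn
    have hn1 : 1 ≤ n := by exact_mod_cast hn0
    have hstepA : ε ^ (n^d) ≤ ε ^ (n^2) :=
      pow_le_pow_of_le_one hε0.le hε1.le (Nat.pow_le_pow_right hn1 hd)
    have h2L : (0:ℝ) < 2*(L:ℝ)+1 := by linarith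
    -- main estimate
    have hlog2L : Real.log (2*(L:ℝ)+1) ≤ 2 * t := by
      have h1 : 2*(L:ℝ)+1 ≤ (L:ℝ)^2 := by nlinarith
      calc Real.log (2*(L:ℝ)+1) ≤ Real.log ((L:ℝ)^2) :=
            Real.log_le_log (by linarith) h1
        _ = 2 * t := by rw [Real.log_pow]; push_cast [htdef]; ring
    have hs3 : R ≤ t ^ ((1:ℝ)/3) := by
      calc R = (R ^ (3:ℕ)) ^ ((1:ℝ)/3) := by
            rw [← Real.rpow_natCast R 3, ← Real.rpow_mul hR0.le]
            norm_num
        _ ≤ t ^ ((1:ℝ)/3) := by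
            rw [← hM]
            exact Real.rpow_le_rpow (by rw [hM]; positivity) htM (by norm_num)
    have h43 : t ^ ((4:ℝ)/3) = t * t ^ ((1:ℝ)/3) := by
      rw [show ((4:ℝ)/3) = 1 + 1/3 by norm_num, Real.rpow_add ht, Real.rpow_one]
    have hsq : ((α * t) ^ ((2:ℝ)/3))^2 = A * t^((4:ℝ)/3) := by
      rw [hA, ← Real.rpow_natCast ((α * t) ^ ((2:ℝ)/3)) 2,
        ← Real.rpow_mul (by positivity : (0:ℝ) ≤ α * t)]
      norm_num
      rw [Real.mul_rpow hα0.le ht.le]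
    have hn2 : (1/4) * A * t * t^((1:ℝ)/3) ≤ (n:ℝ)^2 := by
      have he : (1/4) * A * t * t^((1:ℝ)/3) = ((1/2) * (α*t)^((2:ℝ)/3))^2 := by
        rw [mul_pow, hsq, h43]; ring
      rw [he]
      exact pow_le_pow_left₀ (by positivity) hn.le 2
    have hkey : ((d:ℝ)) * Real.log (2*(L:ℝ)+1) + q * t ≤ (n:ℝ)^2 * c := by
      have hd0 : (0:ℝ) ≤ d := by positivity
      have step1 : ((d:ℝ)) * Real.log (2*(L:ℝ)+1) + q * t ≤ (2*(d:ℝ) + q) * t := by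
        have := mul_le_mul_of_nonneg_left hlog2L hd0
        nlinarith
      have step2 : (2*(d:ℝ) + q) * t ≤ (n:ℝ)^2 * c := by
        calc (2*(d:ℝ) + q) * t = ((1/4) * A * c * t) * R := by rw [← hRc]; ring
          _ ≤ ((1/4) * A * c * t) * (t ^ ((1:ℝ)/3)) :=
              mul_le_mul_of_nonneg_left hs3 (by positivity)
          _ = ((1/4) * A * t * t ^ ((1:ℝ)/3)) * c := by ring
          _ ≤ (n:ℝ)^2 * c := mul_le_mul_of_nonneg_right hn2 hc0.le
      linarith
    calc (2*(L:ℝ)+1)^d * ε^(n^d)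
        ≤ (2*(L:ℝ)+1)^d * ε^(n^2) :=
          mul_le_mul_of_nonneg_left hstepA (by positivity)
      _ = Real.exp ((d:ℝ) * Real.log (2*(L:ℝ)+1) + ((n^2 : ℕ):ℝ) * Real.log ε) := by
          rw [Real.exp_add, Real.exp_nat_mul, Real.exp_nat_mul,
            Real.exp_log h2L, Real.exp_log hε0]
      _ ≤ Real.exp (t * (-q)) := by
          apply Real.exp_le_exp.mpr
          have hlε : Real.log ε = -c := by rw [hc]; ring
          rw [hlε]; push_cast; linarith [hkey]
      _ = (L:ℝ)^(-q) := by rw [Real.rpow_def_of_pos hLpos, ← htdef]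


/-- Large-deviation estimate: for `d ≥ 2` and independent `(X k)_{k ∈ ℤ^d}` with
`P[X k ≥ η] ≥ κ`, the event that every cube `Λ_l(j)`, `j ∈ (lℤ)^d ∩ Λ_{2L}`,
contains a site `k` with `X k ≥ η` has probability at least `1 - L^{-q}`. -/
theorem stmt7 (d : ℕ) (hd : 2 ≤ d)
    {Ω : Type*} [MeasurableSpace Ω] (P : Measure Ω) [IsProbabilityMeasure P]
    (X : (Fin d → ℤ) → Ω → ℝ) (hmeas : ∀ k, Measurable (X k))
    (hindep : iIndepFun X P)
    (η κ : ℝ) (hη : 0 < η) (hκ0 : 0 < κ) (hκ1 : κ ≤ 1)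
    (hlow : ∀ k, ENNReal.ofReal κ ≤ P {ω | η ≤ X k ω}) :
    ∀ q : ℝ, 0 < q → ∀ α : ℝ, 0 < α → α < 1 →
      ∃ L₀ : ℕ, ∀ L : ℕ, L₀ ≤ L → ∀ l : ℤ, Odd l →
        (1 / 2) * (Real.log ((L : ℝ) ^ α)) ^ ((2 : ℝ) / 3) < (l : ℝ) →
        (l : ℝ) ≤ (Real.log ((L : ℝ) ^ α)) ^ ((2 : ℝ) / 3) →
        1 - ENNReal.ofReal ((L : ℝ) ^ (-q)) ≤
          P {ω | ∀ j : Fin d → ℤ, (∀ i, l ∣ j i) → (∀ i, |(j i : ℝ)| < (L : ℝ)) →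
              ∃ k : Fin d → ℤ,
                (∀ i, |(k i : ℝ) - (j i : ℝ)| < (l : ℝ) / 2) ∧ η ≤ X k ω} := by
  intro q hq α hα0 hα1
  obtain ⟨L₀, hL₀3, hL₀⟩ := numeric_bound d hd q α κ hq hα0 hκ0 hκ1
  refine ⟨L₀, fun L hL l hodd hl1 _ => ?_⟩
  have hL3 : (3:ℝ) ≤ L := by exact_mod_cast le_trans hL₀3 hL
  have hLpos : (0:ℝ) < L := by linarith
  have hlogL : 0 < Real.log L := Real.log_pos (by linarith)
  rw [Real.log_rpow hLpos] at hl1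
  have hlpos : (0:ℝ) < l :=
    lt_of_le_of_lt (by positivity : (0:ℝ) ≤ 1/2 * (α * Real.log L) ^ ((2:ℝ)/3)) hl1
  have hl1' : (1:ℤ) ≤ l := by exact_mod_cast hlpos
  obtain ⟨m, hm⟩ := hodd
  have hm0 : 0 ≤ m := by omega
  set G : Set Ω := {ω | ∀ j : Fin d → ℤ, (∀ i, l ∣ j i) → (∀ i, |(j i : ℝ)| < (L : ℝ)) →
      ∃ k : Fin d → ℤ,
        (∀ i, |(k i : ℝ) - (j i : ℝ)| < (l : ℝ) / 2) ∧ η ≤ X k ω} with hG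
  set T : (Fin d → ℤ) → Set Ω := fun k => {ω | X k ω < η} with hT
  set J : Finset (Fin d → ℤ) := Finset.Icc (fun _ => -(L:ℤ)) (fun _ => (L:ℤ)) with hJ
  set S : (Fin d → ℤ) → Finset (Fin d → ℤ) :=
    fun j => Finset.Icc (fun i => j i - m) (fun i => j i + m) with hS
  -- complement contained in union of bad events
  have hsub : Gᶜ ⊆ ⋃ j ∈ J, ⋂ k ∈ S j, T k := by
    intro ω hω
    simp only [hG, Set.mem_compl_iff, Set.mem_setOf_eq] at hω
    push_neg at hω
    obtain ⟨j, hdvd, hjlt, hbad⟩ := hω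
    have hjJ : j ∈ J := by
      rw [hJ, Finset.mem_Icc]
      constructor <;> intro i <;>
        [ (have h := (abs_lt.mp (hjlt i)).1; exact_mod_cast h.le);
          (have h := (abs_lt.mp (hjlt i)).2; exact_mod_cast h.le) ]
    refine Set.mem_iUnion.mpr ⟨j, Set.mem_iUnion.mpr ⟨hjJ, ?_⟩⟩
    · simp only [Set.mem_iInter]
      intro k hk
      rw [hS, Finset.mem_Icc] at hk
      have hki : ∀ i, |(k i : ℝ) - (j i : ℝ)| < (l:ℝ)/2 := by
        intro i
        have h1 : j i - m ≤ k i := hk.1 i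
        have h2 : k i ≤ j i + m := hk.2 i
        have habs : |(k i : ℝ) - (j i : ℝ)| ≤ (m : ℝ) := by
          rw [abs_le]
          constructor <;> [exact_mod_cast (by omega : -(m:ℤ) ≤ k i - j i);
            exact_mod_cast (by omega : k i - j i ≤ (m:ℤ))]
        have hlm : (l:ℝ) = 2*(m:ℝ) + 1 := by exact_mod_cast hm
        rw [hlm]; linarith
      exact hbad k hki
  -- probability of each bad event
  have hTbound : ∀ k, P (T k) ≤ ENNReal.ofReal (1-κ) := by
    intro k
    have hset : T k = {ω | η ≤ X k ω}ᶜ := by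
      ext ω; simp [hT, not_le]
    have hms : MeasurableSet {ω | η ≤ X k ω} :=
      measurableSet_le measurable_const (hmeas k)
    rw [hset, prob_compl_eq_one_sub hms, ENNReal.ofReal_sub _ hκ0.le,
      ENNReal.ofReal_one]
    exact tsub_le_tsub_left (hlow k) 1
  have hcard : ∀ j, (S j).card = l.toNat ^ d := by
    intro j
    rw [hS]
    simp only [Pi.card_Icc, Int.card_Icc]
    calc ∏ i : Fin d, (j i + m + 1 - (j i - m)).toNat
        = ∏ _i : Fin d, l.toNat :=
          Finset.prod_congr rfl (fun i _ => by congr 1; omega)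
      _ = l.toNat ^ d := by simp [Finset.prod_const]
  have hInter : ∀ j, P (⋂ k ∈ S j, T k) ≤ ENNReal.ofReal (1-κ) ^ (l.toNat ^ d) := by
    intro j
    have hcm : ∀ k_1 ∈ S j,
        MeasurableSet[MeasurableSpace.comap (X k_1) inferInstance] (T k_1) :=
      fun k _ => ⟨Set.Iio η, measurableSet_Iio, rfl⟩
    rw [hindep.meas_biInter hcm]
    calc ∏ k ∈ S j, P (T k)
        ≤ ∏ _k ∈ S j, ENNReal.ofReal (1-κ) :=
          Finset.prod_le_prod' (fun k _ => hTbound k)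
      _ = ENNReal.ofReal (1-κ) ^ (S j).card := Finset.prod_const _
      _ = _ := by rw [hcard j]
  have hJcard : J.card = (2*L+1)^d := by
    rw [hJ, Pi.card_Icc]
    simp only [Int.card_Icc]
    rw [Finset.prod_const]
    have h1 : ((L:ℤ) + 1 - -(L:ℤ)).toNat = 2*L+1 := by omega
    rw [h1]
    simp
  have hunion : P Gᶜ ≤ (J.card : ENNReal) * ENNReal.ofReal (1-κ) ^ (l.toNat ^ d) := by
    calc P Gᶜ ≤ P (⋃ j ∈ J, ⋂ k ∈ S j, T k) := measure_mono hsub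
      _ ≤ ∑ j ∈ J, P (⋂ k ∈ S j, T k) := measure_biUnion_finset_le J _
      _ ≤ ∑ _j ∈ J, ENNReal.ofReal (1-κ) ^ (l.toNat ^ d) :=
          Finset.sum_le_sum (fun j _ => hInter j)
      _ = (J.card : ENNReal) * ENNReal.ofReal (1-κ) ^ (l.toNat ^ d) := by
          rw [Finset.sum_const, nsmul_eq_mul]
  have hln : (1/2) * (α * Real.log L) ^ ((2:ℝ)/3) < (l.toNat : ℝ) := by
    have : ((l.toNat : ℤ) : ℝ) = (l:ℝ) := by
      rw [Int.toNat_of_nonneg (by omega : (0:ℤ) ≤ l)]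
    push_cast at this
    rw [this]
    exact hl1
  have hnum := hL₀ L hL l.toNat hln
  have h1κ : (0:ℝ) ≤ 1 - κ := by linarith
  have hfinal : P Gᶜ ≤ ENNReal.ofReal ((L:ℝ)^(-q)) := by
    refine le_trans hunion ?_
    rw [← ENNReal.ofReal_pow h1κ, ← ENNReal.ofReal_natCast,
      ← ENNReal.ofReal_mul (by positivity)]
    apply ENNReal.ofReal_le_ofReal
    calc (J.card:ℝ) * (1-κ)^(l.toNat^d)
        = (2*(L:ℝ)+1)^d * (1-κ)^(l.toNat^d) := by rw [hJcard]; push_cast; ring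
      _ ≤ (L:ℝ)^(-q) := hnum
  rw [tsub_le_iff_right]
  calc (1:ENNReal) = P (G ∪ Gᶜ) := by rw [Set.union_compl_self, measure_univ]
    _ ≤ P G + P Gᶜ := measure_union_le _ _
    _ ≤ P G + ENNReal.ofReal ((L:ℝ)^(-q)) := add_le_add_right hfinal _
end

section
/- Let d ≥ 2 be an integer, c > 0, η > 0, κ ∈ (0,1], δ ∈ (0, 1/2]. For each k ∈ ℤ^d let u_k : ℝ^d → [0,∞) be measurable and x_k ∈ ℝ^d be such that B_δ(x_k) ⊆ Λ_1(k) and u_k(x) ≥ c for all x ∈ B_δ(x_k). Let (ω_k)_{k∈ℤ^d} be a family of independent random variables on a probability space (Ω, P), taking values in [0,1] almost surely, with P[ω_k ≥ η] ≥ κ for all k ∈ ℤ^d, and set V_ω(x) := Σ_{k∈ℤ^d} ω_k u_k(x). Then for all q > 0 and α ∈ (0,1) there exists L₀ ∈ ℕ such that for every integer L ≥ L₀, with probability at least 1 − L^{−q} the following holds: there exist an odd integer l with 1 ≤ l ≤ L and points (y_j), indexed by j ∈ (lℤ)^d with ‖j‖_∞ < L, such that B_δ(y_j) ⊆ Λ_l(j)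 for every such j, η·c·exp(−l^{7/5}) ≥ L^{−α}, and V_ω(x) ≥ η·c for every x in the union of the balls B_δ(y_j). -/
open MeasureTheory ProbabilityTheory
open scoped ENNReal

open Filter

lemma ev_main (A C B p q : ℝ) (hB : 0 < B) (hq : 0 < q) (hpq : p < q) :
    ∀ᶠ t : ℝ in Filter.atTop, A + C * t ^ p ≤ B * t ^ q := by
  have h1 : Filter.Tendsto (fun t : ℝ => t ^ (q - p)) Filter.atTop Filter.atTop :=
    tendsto_rpow_atTop (by linarith)
  have h2 : Filter.Tendsto (fun t : ℝ => t ^ q) Filter.atTop Filter.atTop :=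
    tendsto_rpow_atTop hq
  filter_upwards [h1.eventually_ge_atTop (2 * |C| / B), h2.eventually_ge_atTop (2 * |A| / B),
    Filter.eventually_ge_atTop (1 : ℝ)] with t ht1 ht2 ht3
  have ht0 : (0:ℝ) < t := by linarith
  have hp0 : (0:ℝ) ≤ t ^ p := Real.rpow_nonneg ht0.le p
  have hA : A ≤ B / 2 * t ^ q := by
    calc A ≤ |A| := le_abs_self A
    _ = B / 2 * (2 * |A| / B) := by field_simp
    _ ≤ B / 2 * t ^ q := by gcongr
  have hC : C * t ^ p ≤ B / 2 * t ^ q := by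
    have e1 : B / 2 * t ^ (q - p) * t ^ p = B / 2 * t ^ q := by
      rw [mul_assoc, ← Real.rpow_add ht0]; ring_nf
    calc C * t ^ p ≤ |C| * t ^ p := mul_le_mul_of_nonneg_right (le_abs_self C) hp0
    _ ≤ B / 2 * t ^ (q - p) * t ^ p := by
        refine mul_le_mul_of_nonneg_right ?_ hp0
        calc |C| = B / 2 * (2 * |C| / B) := by field_simp
        _ ≤ B / 2 * t ^ (q - p) := by gcongr
    _ = B / 2 * t ^ q := e1
  linarith

-- scale function
noncomputable def lf (L : ℕ) : ℕ := 2 * ⌈(Real.log L) ^ ((2:ℝ)/3)⌉₊ + 1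

-- basic bounds on lf
lemma lf_bounds {L : ℕ} (h : 1 ≤ Real.log L) :
    (Real.log L) ^ ((2:ℝ)/3) ≤ (lf L : ℝ) ∧ (lf L : ℝ) ≤ 5 * (Real.log L) ^ ((2:ℝ)/3) := by
  set t := Real.log L
  have ht23 : (1:ℝ) ≤ t ^ ((2:ℝ)/3) := Real.one_le_rpow h (by norm_num)
  have hc1 : (t ^ ((2:ℝ)/3)) ≤ (⌈t ^ ((2:ℝ)/3)⌉₊ : ℝ) := Nat.le_ceil _
  have hc2 : (⌈t ^ ((2:ℝ)/3)⌉₊ : ℝ) < t ^ ((2:ℝ)/3) + 1 := Nat.ceil_lt_add_one (by linarith)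
  constructor
  · unfold lf; push_cast; linarith
  · unfold lf; push_cast; linarith


lemma ev_pack (η c κ : ℝ) (hη : 0 < η) (hc : 0 < c) (hκ0 : 0 < κ) (hκ1 : κ ≤ 1)
    (d : ℕ) (hd : 2 ≤ d) (q α : ℝ) (hq : 0 < q) (hα : 0 < α) :
    ∀ᶠ L : ℕ in atTop,
      1 ≤ Real.log L ∧ 1 ≤ L ∧ (lf L : ℝ) ≤ (L : ℝ) ∧
      ((lf L : ℝ)) ^ ((7:ℝ)/5) ≤ α * Real.log L + Real.log (η * c) ∧
      (2 * (L:ℝ)) ^ d * (1 - κ) ^ (lf L ^ d) ≤ (L : ℝ) ^ (-q) := by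
  have hcast : Tendsto (fun L : ℕ => (L : ℝ)) atTop atTop := tendsto_natCast_atTop_atTop
  have hlog : Tendsto (fun L : ℕ => Real.log L) atTop atTop :=
    Real.tendsto_log_atTop.comp hcast
  have C1 : ∀ᶠ L : ℕ in atTop, 1 ≤ Real.log L := hlog.eventually_ge_atTop 1
  have C1' : ∀ᶠ L : ℕ in atTop, 1 ≤ L := eventually_ge_atTop 1
  -- 5 log x ≤ x eventually
  have h5 : ∀ᶠ x : ℝ in atTop, 5 * Real.log x ≤ x := by
    have h := Real.isLittleO_log_id_atTop.def (by norm_num : (0:ℝ) < 1/5)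
    filter_upwards [h, eventually_ge_atTop (0:ℝ)] with x hx hx0
    have h1 : |Real.log x| ≤ 1/5 * |x| := by simpa [Real.norm_eq_abs] using hx
    have h2 : Real.log x ≤ |Real.log x| := le_abs_self _
    rw [abs_of_nonneg hx0] at h1
    linarith
  have C2 : ∀ᶠ L : ℕ in atTop, (lf L : ℝ) ≤ (L : ℝ) := by
    filter_upwards [C1, hcast.eventually h5] with L h1 h2
    have hb := (lf_bounds h1).2
    have ht : (Real.log L) ^ ((2:ℝ)/3) ≤ Real.log L := by
      have := Real.rpow_le_rpow_of_exponent_le h1 (by norm_num : (2:ℝ)/3 ≤ 1)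
      rwa [Real.rpow_one] at this
    linarith
  have C3 : ∀ᶠ L : ℕ in atTop,
      ((lf L : ℝ)) ^ ((7:ℝ)/5) ≤ α * Real.log L + Real.log (η * c) := by
    have hev := ev_main (-(Real.log (η * c))) 25 α ((14:ℝ)/15) 1 hα one_pos (by norm_num)
    filter_upwards [C1, hlog.eventually hev] with L h1 h2
    set t := Real.log L with htdef
    have ht0 : (0:ℝ) ≤ t := by linarith
    have hb := (lf_bounds h1).2
    have hlf0 : (0:ℝ) ≤ (lf L : ℝ) := Nat.cast_nonneg _
    have e1 : ((lf L : ℝ)) ^ ((7:ℝ)/5) ≤ (5 * t ^ ((2:ℝ)/3)) ^ ((7:ℝ)/5) :=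
      Real.rpow_le_rpow hlf0 hb (by norm_num)
    have e2 : (5 * t ^ ((2:ℝ)/3)) ^ ((7:ℝ)/5)
        = (5:ℝ) ^ ((7:ℝ)/5) * (t ^ ((2:ℝ)/3)) ^ ((7:ℝ)/5) :=
      Real.mul_rpow (by norm_num) (Real.rpow_nonneg ht0 _)
    have e3 : (t ^ ((2:ℝ)/3)) ^ ((7:ℝ)/5) = t ^ ((14:ℝ)/15) := by
      rw [← Real.rpow_mul ht0]; norm_num
    have e4 : (5:ℝ) ^ ((7:ℝ)/5) ≤ 25 := by
      have := Real.rpow_le_rpow_of_exponent_le (by norm_num : (1:ℝ) ≤ 5)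
        (by norm_num : (7:ℝ)/5 ≤ 2)
      rwa [show ((2:ℝ)) = ((2:ℕ):ℝ) by norm_num, Real.rpow_natCast, show (5:ℝ)^(2:ℕ) = 25 by norm_num] at this
    have e5 : (0:ℝ) ≤ t ^ ((14:ℝ)/15) := Real.rpow_nonneg ht0 _
    have : ((lf L : ℝ)) ^ ((7:ℝ)/5) ≤ 25 * t ^ ((14:ℝ)/15) := by
      rw [e2, e3] at e1
      nlinarith
    rw [Real.rpow_one] at h2
    linarith
  have C4 : ∀ᶠ L : ℕ in atTop,
      (2 * (L:ℝ)) ^ d * (1 - κ) ^ (lf L ^ d) ≤ (L : ℝ) ^ (-q) := by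
    rcases eq_or_lt_of_le hκ1 with hκe | hκlt
    · filter_upwards [C1'] with L h1
      have : (1 - κ) = 0 := by rw [← hκe]; ring
      rw [this, zero_pow (pow_ne_zero d (by unfold lf; omega)), mul_zero]
      exact Real.rpow_nonneg (Nat.cast_nonneg _) _
    · set s := 1 - κ with hsdef
      have hs0 : 0 < s := by simp [hsdef]; linarith
      have hs1 : s < 1 := by simp [hsdef]; linarith
      have hr : 0 < -Real.log s := by
        have := Real.log_neg hs0 hs1; linarith
      have hev := ev_main ((d:ℝ) * Real.log 2) ((d:ℝ) + q) (-Real.log s) 1 ((4:ℝ)/3)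
        hr (by norm_num) (by norm_num)
      filter_upwards [C1, C1', hlog.eventually hev] with L h1 hL1 h2
      set t := Real.log L with htdef
      have ht0 : (0:ℝ) ≤ t := by linarith
      have hL0 : (0:ℝ) < (L:ℝ) := by exact_mod_cast hL1
      have hb := (lf_bounds h1).1
      have hlf1 : (1:ℝ) ≤ (lf L : ℝ) := by
        have : 1 ≤ lf L := by unfold lf; omega
        exact_mod_cast this
      -- (lf L)^d ≥ t^(4/3)
      have e1 : t ^ ((4:ℝ)/3) ≤ ((lf L ^ d : ℕ) : ℝ) := by
        push_cast
        have k1 : t ^ ((4:ℝ)/3) = (t ^ ((2:ℝ)/3)) ^ (2:ℕ) := by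
          rw [← Real.rpow_natCast (t ^ ((2:ℝ)/3)) 2, ← Real.rpow_mul ht0]; norm_num
        have k2 : (t ^ ((2:ℝ)/3)) ^ (2:ℕ) ≤ ((lf L : ℝ)) ^ (2:ℕ) :=
          pow_le_pow_left₀ (Real.rpow_nonneg ht0 _) hb 2
        have k3 : ((lf L : ℝ)) ^ (2:ℕ) ≤ ((lf L : ℝ)) ^ d :=
          pow_le_pow_right₀ hlf1 hd
        rw [k1]; exact k2.trans k3
      -- rewrite everything as exponentials
      have hLne : (L:ℝ) ≠ 0 := ne_of_gt hL0
      have r1 : (2 * (L:ℝ)) ^ d = Real.exp ((d:ℝ) * (Real.log 2 + t)) := by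
        rw [show Real.log 2 + t = Real.log (2 * (L:ℝ)) from (Real.log_mul two_ne_zero hLne).symm,
          Real.exp_nat_mul, Real.exp_log (by positivity : (0:ℝ) < 2 * (L:ℝ))]
      have r2 : s ^ (lf L ^ d) = Real.exp (((lf L ^ d : ℕ):ℝ) * Real.log s) := by
        rw [Real.exp_nat_mul, Real.exp_log hs0]
      have r3 : (L:ℝ) ^ (-q) = Real.exp (t * (-q)) := Real.rpow_def_of_pos hL0 _
      rw [r1, r2, r3, ← Real.exp_add, Real.exp_le_exp]
      have hn : (0:ℝ) ≤ ((lf L ^ d : ℕ):ℝ) := Nat.cast_nonneg _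
      have : (-Real.log s) * t ^ ((4:ℝ)/3) ≤ (-Real.log s) * ((lf L ^ d : ℕ):ℝ) :=
        mul_le_mul_of_nonneg_left e1 hr.le
      rw [Real.rpow_one] at h2
      nlinarith
  filter_upwards [C1, C1', C2, C3, C4] with L a b c' d' e'
  exact ⟨a, b, c', d', e'⟩

set_option maxHeartbeats 1000000 in
/-- Probabilistic core of the initial scale estimate: with probability at least
`1 - L^{-q}`, the random potential `V_ω = Σ_k X_k(ω) u_k` exceeds `η c` on an
`(l,δ)`-equidistributed family of `δ`-balls inside `Λ_{2L}`, at an odd scale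
`l ≤ L` for which `η c exp(-l^{7/5}) ≥ L^{-α}`. -/
theorem stmt11 (d : ℕ) (hd : 2 ≤ d) (c η κ δ : ℝ) (hc : 0 < c) (hη : 0 < η)
    (hκ0 : 0 < κ) (hκ1 : κ ≤ 1) (hδ0 : 0 < δ) (hδ : δ ≤ 1 / 2)
    (u : (Fin d → ℤ) → EuclideanSpace ℝ (Fin d) → ℝ)
    (humeas : ∀ k, Measurable (u k)) (hu0 : ∀ k x, 0 ≤ u k x)
    (xc : (Fin d → ℤ) → EuclideanSpace ℝ (Fin d))
    (hball : ∀ k : Fin d → ℤ,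
      Metric.ball (xc k) δ ⊆ {x : EuclideanSpace ℝ (Fin d) | ∀ i, |x i - (k i : ℝ)| < 1 / 2})
    (huc : ∀ k : Fin d → ℤ, ∀ x ∈ Metric.ball (xc k) δ, c ≤ u k x)
    {Ω : Type*} [MeasurableSpace Ω] (P : Measure Ω) [IsProbabilityMeasure P]
    (X : (Fin d → ℤ) → Ω → ℝ) (hmeas : ∀ k, Measurable (X k))
    (hindep : iIndepFun X P)
    (hval : ∀ k, ∀ᵐ ω ∂P, X k ω ∈ Set.Icc (0 : ℝ) 1)
    (hlow : ∀ k, ENNReal.ofReal κ ≤ P {ω | η ≤ X k ω}) :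
    ∀ q : ℝ, 0 < q → ∀ α : ℝ, 0 < α → α < 1 →
      ∃ L₀ : ℕ, ∀ L : ℕ, L₀ ≤ L →
        1 - ENNReal.ofReal ((L : ℝ) ^ (-q)) ≤
        P {ω | ∃ l : ℕ, Odd l ∧ 1 ≤ l ∧ l ≤ L ∧
            (L : ℝ) ^ (-α) ≤ η * c * Real.exp (-((l : ℝ) ^ ((7 : ℝ) / 5))) ∧
            ∃ y : (Fin d → ℤ) → EuclideanSpace ℝ (Fin d),
              ∀ j : Fin d → ℤ, (∀ i, (l : ℤ) ∣ j i) → (∀ i, |(j i : ℝ)| < (L : ℝ)) →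
                Metric.ball (y j) δ ⊆
                  {x : EuclideanSpace ℝ (Fin d) | ∀ i, |x i - (j i : ℝ)| < (l : ℝ) / 2} ∧
                ∀ x ∈ Metric.ball (y j) δ,
                  ENNReal.ofReal (η * c) ≤
                    ∑' k : Fin d → ℤ, ENNReal.ofReal (X k ω * u k x)} := by
  intro q hq α hα hα1
  classical
  have hpack := ev_pack η c κ hη hc hκ0 hκ1 d hd q α hq hα
  rw [Filter.eventually_atTop] at hpack
  obtain ⟨L₀, hL₀⟩ := hpack
  refine ⟨L₀, fun L hL => ?_⟩
  obtain ⟨ht1, hL1, hlL, hii, hiii⟩ := hL₀ L hL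
  set m : ℕ := ⌈(Real.log L) ^ ((2:ℝ)/3)⌉₊ with hm
  have hlf : lf L = 2 * m + 1 := rfl
  set J : Finset (Fin d → ℤ) :=
    Fintype.piFinset (fun _ => Finset.Icc (-(L:ℤ)+1) ((L:ℤ)-1)) with hJ
  set Bx : (Fin d → ℤ) → Finset (Fin d → ℤ) :=
    fun j => Fintype.piFinset (fun i => Finset.Icc (j i - (m:ℤ)) (j i + (m:ℤ))) with hBx
  set E : Set Ω := ⋂ j ∈ J, ⋃ k ∈ Bx j, {ω | η ≤ X k ω} with hE
  have hLpos : (0:ℝ) < L := by exact_mod_cast hL1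
  -- Step A : E is contained in the target event
  have hEsub : E ⊆ {ω | ∃ l : ℕ, Odd l ∧ 1 ≤ l ∧ l ≤ L ∧
      (L : ℝ) ^ (-α) ≤ η * c * Real.exp (-((l : ℝ) ^ ((7 : ℝ) / 5))) ∧
      ∃ y : (Fin d → ℤ) → EuclideanSpace ℝ (Fin d),
        ∀ j : Fin d → ℤ, (∀ i, (l : ℤ) ∣ j i) → (∀ i, |(j i : ℝ)| < (L : ℝ)) →
          Metric.ball (y j) δ ⊆
            {x : EuclideanSpace ℝ (Fin d) | ∀ i, |x i - (j i : ℝ)| < (l : ℝ) / 2} ∧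
          ∀ x ∈ Metric.ball (y j) δ,
            ENNReal.ofReal (η * c) ≤
              ∑' k : Fin d → ℤ, ENNReal.ofReal (X k ω * u k x)} := by
    intro ω hω
    simp only [Set.mem_setOf_eq]
    refine ⟨2*m+1, ⟨m, by ring⟩, by omega, ?_, ?_, ?_⟩
    · have : ((2*m+1 : ℕ):ℝ) ≤ (L:ℝ) := by rw [← hlf]; exact hlL
      exact_mod_cast this
    · have hs : (L:ℝ)^(-α) = Real.exp (Real.log L * (-α)) := Real.rpow_def_of_pos hLpos _
      have hrhs : η * c * Real.exp (-(((2*m+1:ℕ) : ℝ) ^ ((7:ℝ)/5)))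
          = Real.exp (Real.log (η*c) + -(((2*m+1:ℕ):ℝ) ^ ((7:ℝ)/5))) := by
        rw [Real.exp_add, Real.exp_log (mul_pos hη hc)]
      rw [hs, hrhs]
      refine Real.exp_le_exp.mpr ?_
      have : ((lf L : ℝ)) ^ ((7:ℝ)/5) = ((2*m+1:ℕ):ℝ) ^ ((7:ℝ)/5) := by rw [hlf]
      rw [this] at hii
      linarith
    · set y : (Fin d → ℤ) → EuclideanSpace ℝ (Fin d) :=
        fun j => if h : ∃ k ∈ Bx j, η ≤ X k ω then xc h.choose else xc j with hydef
      refine ⟨y, fun j hdvd hjL => ?_⟩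
      have hjJ : j ∈ J := by
        rw [hJ, Fintype.mem_piFinset]
        intro i
        rw [Finset.mem_Icc]
        have h1 := hjL i
        have h2 : |j i| < (L:ℤ) := by exact_mod_cast (by push_cast; exact h1 : |(j i : ℝ)| < ((L:ℤ):ℝ))
        rw [abs_lt] at h2
        omega
      have hex : ∃ k ∈ Bx j, η ≤ X k ω := by
        rw [hE] at hω
        have h3 := Set.mem_iInter₂.mp hω j hjJ
        simpa using Set.mem_iUnion₂.mp h3
      have hyj : y j = xc hex.choose := by rw [hydef]; exact dif_pos hex
      obtain ⟨hk₀B, hk₀X⟩ := hex.choose_spec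
      have hk₀ : ∀ i, j i - (m:ℤ) ≤ hex.choose i ∧ hex.choose i ≤ j i + (m:ℤ) := by
        have h4 := Fintype.mem_piFinset.mp hk₀B
        intro i; exact Finset.mem_Icc.mp (h4 i)
      constructor
      · rw [hyj]
        intro x hx
        have h5 := hball hex.choose hx
        intro i
        have h6 := h5 i
        have h7 := hk₀ i
        have h8 : ((j i : ℝ)) - (m:ℝ) ≤ (hex.choose i : ℝ) ∧
            ((hex.choose i : ℝ)) ≤ (j i : ℝ) + (m:ℝ) := by
          constructor <;> [exact_mod_cast h7.1; exact_mod_cast h7.2]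
        rw [abs_lt] at h6 ⊢
        have hl2 : (((2*m+1:ℕ)):ℝ) = 2*(m:ℝ)+1 := by push_cast; ring
        rw [hl2]
        constructor <;> linarith [h6.1, h6.2, h8.1, h8.2]
      · intro x hx
        rw [hyj] at hx
        refine le_trans (ENNReal.ofReal_le_ofReal ?_) (ENNReal.le_tsum hex.choose)
        exact mul_le_mul hk₀X (huc hex.choose x hx) hc.le (le_trans hη.le hk₀X)
  -- Step B : probability bound
  refine le_trans ?_ (measure_mono hEsub)
  have hcompl : P Eᶜ ≤ ENNReal.ofReal ((L:ℝ)^(-q)) := by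
    have hEc : Eᶜ = ⋃ j ∈ J, ⋂ k ∈ Bx j, (X k) ⁻¹' (Set.Iio η) := by
      rw [hE]
      ext ω
      simp only [Set.mem_compl_iff, Set.mem_iInter, Set.mem_iUnion, Set.mem_setOf_eq,
        Set.mem_preimage, Set.mem_Iio, not_forall, not_exists, not_le, exists_prop]
      constructor
      · rintro ⟨j, hjJ, hj2⟩
        refine ⟨j, hjJ, fun k hk => ?_⟩
        by_contra hcon
        exact hj2 k ⟨hk, not_lt.mp hcon⟩
      · rintro ⟨j, hjJ, hj2⟩
        exact ⟨j, hjJ, fun k hk => absurd hk.2 (not_le.mpr (hj2 k hk.1))⟩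
    rw [hEc]
    refine le_trans (measure_biUnion_finset_le J _) ?_
    have hbound : ∀ j ∈ J, P (⋂ k ∈ Bx j, (X k) ⁻¹' (Set.Iio η))
        ≤ (1 - ENNReal.ofReal κ) ^ ((2*m+1) ^ d) := by
      intro j _
      rw [hindep.meas_biInter (fun k _ => ⟨Set.Iio η, measurableSet_Iio, rfl⟩)]
      have hfac : ∀ k ∈ Bx j, P ((X k) ⁻¹' (Set.Iio η)) ≤ 1 - ENNReal.ofReal κ := by
        intro k _
        have h1 : (X k) ⁻¹' (Set.Iio η) = {ω | η ≤ X k ω}ᶜ := by ext ω; simp [not_le]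
        have h2 : MeasurableSet {ω | η ≤ X k ω} := (hmeas k) measurableSet_Ici
        rw [h1, prob_compl_eq_one_sub h2]
        exact tsub_le_tsub_left (hlow k) 1
      have hcard : (Bx j).card = (2*m+1) ^ d := by
        rw [hBx]
        rw [Fintype.card_piFinset]
        have h3 : ∀ i : Fin d, (Finset.Icc (j i - (m:ℤ)) (j i + (m:ℤ))).card = 2*m+1 := by
          intro i
          rw [Int.card_Icc]
          omega
        rw [Finset.prod_congr rfl (fun i _ => h3 i), Finset.prod_const,
          Finset.card_univ, Fintype.card_fin]
      calc ∏ k ∈ Bx j, P ((X k) ⁻¹' (Set.Iio η))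
          ≤ ∏ _k ∈ Bx j, (1 - ENNReal.ofReal κ) := Finset.prod_le_prod' hfac
        _ = (1 - ENNReal.ofReal κ) ^ (Bx j).card := Finset.prod_const _
        _ = (1 - ENNReal.ofReal κ) ^ ((2*m+1) ^ d) := by rw [hcard]
    refine le_trans (Finset.sum_le_sum hbound) ?_
    rw [Finset.sum_const, nsmul_eq_mul]
    have hcard2 : J.card ≤ (2*L)^d := by
      rw [hJ, Fintype.card_piFinset]
      have h3 : (Finset.Icc (-(L:ℤ)+1) ((L:ℤ)-1)).card ≤ 2*L := by
        rw [Int.card_Icc]; omega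
      calc ∏ _i : Fin d, (Finset.Icc (-(L:ℤ)+1) ((L:ℤ)-1)).card
          ≤ ∏ _i : Fin d, 2*L := Finset.prod_le_prod' (fun i _ => h3)
        _ = (2*L)^d := by rw [Finset.prod_const, Finset.card_univ, Fintype.card_fin]
    have hone : 1 - ENNReal.ofReal κ = ENNReal.ofReal (1 - κ) := by
      rw [ENNReal.ofReal_sub 1 hκ0.le, ENNReal.ofReal_one]
    calc (J.card : ℝ≥0∞) * (1 - ENNReal.ofReal κ) ^ ((2*m+1) ^ d)
        ≤ (((2*L)^d : ℕ) : ℝ≥0∞) * (1 - ENNReal.ofReal κ) ^ ((2*m+1) ^ d) :=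
          mul_le_mul_left (by exact_mod_cast hcard2) _
      _ = ENNReal.ofReal ((((2*L)^d : ℕ) : ℝ) * (1 - κ) ^ ((2*m+1) ^ d)) := by
          rw [hone, ← ENNReal.ofReal_pow (by linarith), ← ENNReal.ofReal_natCast,
            ← ENNReal.ofReal_mul (Nat.cast_nonneg _)]
      _ ≤ ENNReal.ofReal ((L:ℝ)^(-q)) := by
          refine ENNReal.ofReal_le_ofReal ?_
          have : ((((2*L)^d : ℕ)) : ℝ) = (2*(L:ℝ))^d := by push_cast; ring
          rw [this]
          have hlfeq : lf L ^ d = (2*m+1)^d := by rw [hlf]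
          rw [hlfeq] at hiii
          exact hiii
  have h1 : (1:ℝ≥0∞) ≤ P E + P Eᶜ := by
    rw [← measure_univ (μ := P), ← Set.union_compl_self E]
    exact measure_union_le E Eᶜ
  exact le_trans (tsub_le_tsub_left hcompl 1) (tsub_le_iff_right.mpr h1)
end
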